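/- Let P(m) be the natural unit interval order on [n] induced by m = (2, m_2, m_3, n, ..., n), with 2 incomparable to 3 and 3 incomparable to 4. Then every P(m)-tableau has shape among (1^n), (2,1^{n-2}), (2^2,1^{n-4}), (2^3,1^{n-6}), (3,1^{n-3}), (3,2,1^{n-5}). -/

import Mathlib

/-- The order relation of the natural unit interval order `P(m)` on `{1, …, n}`:
`i <_P j` iff `m i < j`. -/
def ltP (m : ℕ → ℕ) (i j : ℕ) : Prop := m i < j

/-- `u` and `v` are incomparable in `P(m)` (an edge of the incomparability graph). -/
def Incomp (m : ℕ → ℕ) (u v : ℕ) : Prop := u ≠ v ∧ ¬ ltP m u v ∧ ¬ ltP m v u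

/-- `m` encodes a natural unit interval order `P(m)` on `{1, …, n}` induced by the sequence
`(2, m 2, m 3, n, …, n)`: `m 1 = 2`; `i ≤ m i ≤ n` for `1 ≤ i ≤ n`; `m` is nondecreasing on
`{1, …, n}`; and `m i = n` for `4 ≤ i ≤ n`. -/
def SeqHyp (n : ℕ) (m : ℕ → ℕ) : Prop :=
  m 1 = 2 ∧
  (∀ i, 1 ≤ i → i ≤ n → i ≤ m i ∧ m i ≤ n) ∧
  (∀ i j, 1 ≤ i → i ≤ j → j ≤ n → m i ≤ m j) ∧
  (∀ i, 4 ≤ i → i ≤ n → m i = n)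

/-- A `P(m)`-tableau of shape `sh` (a partition of `n`, given as a nonincreasing list of row
lengths): a filling of the cells `(i, j)` with `j < sh[i]` by the elements `1, …, n`, each
appearing exactly once, with rows strictly increasing in `<_P` and entries in consecutive rows
of a column pairwise non-decreasing (`¬ b <_P a` whenever `a` is immediately above `b`).
Cells outside the shape carry the junk value `0`. -/
structure PTab (n : ℕ) (m : ℕ → ℕ) (sh : List ℕ) where
  entry : ℕ → ℕ → ℕ
  zero_outside : ∀ i j, sh.getD i 0 ≤ j → entry i j = 0
  mem_inside : ∀ i j, j < sh.getD i 0 → entry i j ∈ Finset.Icc 1 n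
  inj : ∀ i j i' j', j < sh.getD i 0 → j' < sh.getD i' 0 →
    entry i j = entry i' j' → i = i' ∧ j = j'
  surj : ∀ v ∈ Finset.Icc 1 n, ∃ i j, j < sh.getD i 0 ∧ entry i j = v
  rows : ∀ i j j', j < j' → j' < sh.getD i 0 → ltP m (entry i j) (entry i j')
  cols : ∀ i j, j < sh.getD (i + 1) 0 → ¬ ltP m (entry (i + 1) j) (entry i j)

/-- The number of `G`-inversions of a `P(m)`-tableau: pairs of cells carrying incomparable
values `u < v` with `u` in a strictly higher row than `v`. -/
noncomputable def invG {n : ℕ} {m : ℕ → ℕ} {sh : List ℕ} (T : PTab n m sh) : ℕ :=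
  Nat.card {c : (ℕ × ℕ) × (ℕ × ℕ) //
    c.1.2 < sh.getD c.1.1 0 ∧ c.2.2 < sh.getD c.2.1 0 ∧
    c.1.1 < c.2.1 ∧
    T.entry c.1.1 c.1.2 < T.entry c.2.1 c.2.2 ∧
    Incomp m (T.entry c.1.1 c.1.2) (T.entry c.2.1 c.2.2)}

/-- For the natural unit interval order `P(m)` on `{1,…,n}` induced by `(2, m₂, m₃, n, …, n)`,
with `2` incomparable to `3` and `3` incomparable to `4`, every `P(m)`-tableau has shape
among `(1^n)`, `(2,1^{n-2})`, `(2²,1^{n-4})`, `(2³,1^{n-6})`, `(3,1^{n-3})`,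
`(3,2,1^{n-5})`. -/

lemma ptab_rep1 : ∀ (sh : List ℕ), sh.Pairwise (· ≥ ·) → (∀ x ∈ sh, 0 < x) →
    sh.getD 0 0 ≤ 1 → sh = List.replicate sh.sum 1
  | [], _, _, _ => rfl
  | a :: tl, hs, hp, h1 => by
    have ha : a = 1 := by
      have := hp a (by simp); simp at h1; omega
    subst ha
    have htl : tl = List.replicate tl.sum 1 := by
      apply ptab_rep1 tl hs.of_cons (fun x hx => hp x (by simp [hx]))
      cases tl with
      | nil => simp
      | cons b tl2 =>
        have : 1 ≥ b := List.rel_of_pairwise_cons hs (a' := b) (by simp)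
        simpa using this
    rw [List.sum_cons]
    conv_lhs => rw [htl]
    simp [List.replicate_succ, Nat.add_comm]

theorem ptab_shapes (n : ℕ) (m : ℕ → ℕ) (hn : 4 ≤ n) (hm : SeqHyp n m)
    (h23 : 3 ≤ m 2) (h34 : 4 ≤ m 3)
    (sh : List ℕ) (hsorted : sh.Pairwise (· ≥ ·)) (hpos : ∀ x ∈ sh, 0 < x)
    (hsum : sh.sum = n) (T : PTab n m sh) :
    sh ∈ [List.replicate n 1,
          2 :: List.replicate (n - 2) 1,
          2 :: 2 :: List.replicate (n - 4) 1,
          2 :: 2 :: 2 :: List.replicate (n - 6) 1,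
          3 :: List.replicate (n - 3) 1,
          3 :: 2 :: List.replicate (n - 5) 1] := by
  obtain ⟨hm1, hbound, hmono, htop⟩ := hm
  have hmem : ∀ i j, j < sh.getD i 0 → 1 ≤ T.entry i j ∧ T.entry i j ≤ n := by
    intro i j hj; have := T.mem_inside i j hj; simpa [Finset.mem_Icc] using this
  have hlt : ∀ u v, 1 ≤ u → u ≤ n → ltP m u v → u < v := by
    intro u v h1 h2 h; have := (hbound u h1 h2).1; unfold ltP at h; omega
  have hsmall : ∀ i j, j + 1 < sh.getD i 0 → 1 ≤ T.entry i j ∧ T.entry i j ≤ 3 := by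
    intro i j hj
    have hj0 : j < sh.getD i 0 := by omega
    have hr := T.rows i j (j+1) (Nat.lt_succ_self j) hj
    have h1 := hmem i j hj0
    have h2 := hmem i (j+1) hj
    refine ⟨h1.1, ?_⟩
    by_contra h4
    have : m (T.entry i j) = n := htop _ (by omega) h1.2
    unfold ltP at hr; omega
  have hne : ∀ i j i' j', j < sh.getD i 0 → j' < sh.getD i' 0 → (i ≠ i' ∨ j ≠ j') →
      T.entry i j ≠ T.entry i' j' := by
    intro i j i' j' hj hj' hij heq
    obtain ⟨h1, h2⟩ := T.inj i j i' j' hj hj' heq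
    tauto
  have hA : sh.getD 0 0 ≤ 3 := by
    by_contra h4
    push_neg at h4
    have s0 := hsmall 0 0 (by omega)
    have s1 := hsmall 0 1 (by omega)
    have r01 := T.rows 0 0 1 (by omega) (by omega)
    have r12 := T.rows 0 1 2 (by omega) (by omega)
    have s2m := hmem 0 2 (by omega)
    have l01 := hlt _ _ s0.1 (by omega) r01
    have l12 := hlt _ _ s1.1 (by omega) r12
    have s2 := hsmall 0 2 (by omega)
    have e0 : T.entry 0 0 = 1 := by omega
    have e1 : T.entry 0 1 = 2 := by omega
    unfold ltP at r01; rw [e0, e1, hm1] at r01; omega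
  have hB : ¬(3 ≤ sh.getD 0 0 ∧ 3 ≤ sh.getD 1 0) := by
    rintro ⟨h0, h1⟩
    have s00 := hsmall 0 0 (by omega)
    have s01 := hsmall 0 1 (by omega)
    have s10 := hsmall 1 0 (by omega)
    have s11 := hsmall 1 1 (by omega)
    have d1 := hne 0 0 0 1 (by omega) (by omega) (Or.inr (by omega))
    have d2 := hne 0 0 1 0 (by omega) (by omega) (Or.inl (by omega))
    have d3 := hne 0 0 1 1 (by omega) (by omega) (Or.inl (by omega))
    have d4 := hne 0 1 1 0 (by omega) (by omega) (Or.inl (by omega))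
    have d5 := hne 0 1 1 1 (by omega) (by omega) (Or.inl (by omega))
    have d6 := hne 1 0 1 1 (by omega) (by omega) (Or.inr (by omega))
    omega
  have hC : ¬(3 ≤ sh.getD 0 0 ∧ 2 ≤ sh.getD 1 0 ∧ 2 ≤ sh.getD 2 0) := by
    rintro ⟨h0, h1, h2⟩
    have s00 := hsmall 0 0 (by omega)
    have s01 := hsmall 0 1 (by omega)
    have s10 := hsmall 1 0 (by omega)
    have s20 := hsmall 2 0 (by omega)
    have d1 := hne 0 0 0 1 (by omega) (by omega) (Or.inr (by omega))
    have d2 := hne 0 0 1 0 (by omega) (by omega) (Or.inl (by omega))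
    have d3 := hne 0 0 2 0 (by omega) (by omega) (Or.inl (by omega))
    have d4 := hne 0 1 1 0 (by omega) (by omega) (Or.inl (by omega))
    have d5 := hne 0 1 2 0 (by omega) (by omega) (Or.inl (by omega))
    have d6 := hne 1 0 2 0 (by omega) (by omega) (Or.inl (by omega))
    omega
  have hD : ¬(2 ≤ sh.getD 0 0 ∧ 2 ≤ sh.getD 1 0 ∧ 2 ≤ sh.getD 2 0 ∧ 2 ≤ sh.getD 3 0) := by
    rintro ⟨h0, h1, h2, h3⟩
    have s00 := hsmall 0 0 (by omega)
    have s10 := hsmall 1 0 (by omega)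
    have s20 := hsmall 2 0 (by omega)
    have s30 := hsmall 3 0 (by omega)
    have d1 := hne 0 0 1 0 (by omega) (by omega) (Or.inl (by omega))
    have d2 := hne 0 0 2 0 (by omega) (by omega) (Or.inl (by omega))
    have d3 := hne 0 0 3 0 (by omega) (by omega) (Or.inl (by omega))
    have d4 := hne 1 0 2 0 (by omega) (by omega) (Or.inl (by omega))
    have d5 := hne 1 0 3 0 (by omega) (by omega) (Or.inl (by omega))
    have d6 := hne 2 0 3 0 (by omega) (by omega) (Or.inl (by omega))
    omega
  clear hmem hsmall hne hlt T
  rcases sh with _ | ⟨a, tl⟩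
  · simp at hsum; omega
  have ha1 : 1 ≤ a := hpos a (by simp)
  simp only [List.getD_cons_zero, List.getD_cons_succ] at hA hB hC hD
  interval_cases a
  · -- a = 1
    have hrep := ptab_rep1 (1 :: tl) hsorted hpos (by simp)
    rw [hsum] at hrep
    rw [hrep]; simp
  · -- a = 2
    rcases tl with _ | ⟨b, tl2⟩
    · simp at hsum; omega
    have hb1 : 1 ≤ b := hpos b (by simp)
    have hb2 : b ≤ 2 := List.rel_of_pairwise_cons hsorted (a' := b) (by simp)
    simp only [List.getD_cons_zero, List.getD_cons_succ] at hB hC hD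
    interval_cases b
    · -- (2,1,...)
      have hrep := ptab_rep1 (1 :: tl2) hsorted.of_cons
        (fun x hx => hpos x (by simp [hx])) (by simp)
      have hs2 : (1 :: tl2).sum = n - 2 := by simp at hsum ⊢; omega
      rw [hs2] at hrep
      rw [hrep]; simp
    · -- (2,2,...)
      rcases tl2 with _ | ⟨c, tl3⟩
      · have h4 : n = 4 := by simp at hsum; omega
        subst h4; simp
      have hc1 : 1 ≤ c := hpos c (by simp)
      have hc2 : c ≤ 2 := List.rel_of_pairwise_cons hsorted.of_cons (a' := c) (by simp)
      simp only [List.getD_cons_zero, List.getD_cons_succ] at hD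
      interval_cases c
      · -- (2,2,1,...)
        have hrep := ptab_rep1 (1 :: tl3) hsorted.of_cons.of_cons
          (fun x hx => hpos x (by simp [hx])) (by simp)
        have hs2 : (1 :: tl3).sum = n - 4 := by simp at hsum ⊢; omega
        rw [hs2] at hrep
        rw [hrep]; simp
      · -- (2,2,2,...)
        have hd : tl3.getD 0 0 ≤ 1 := by omega
        have hrep := ptab_rep1 tl3 hsorted.of_cons.of_cons.of_cons
          (fun x hx => hpos x (by simp [hx])) hd
        have hs2 : tl3.sum = n - 6 := by simp at hsum ⊢; omega
        rw [hs2] at hrep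
        rw [hrep]; simp
  · -- a = 3
    rcases tl with _ | ⟨b, tl2⟩
    · simp at hsum; omega
    have hb1 : 1 ≤ b := hpos b (by simp)
    simp only [List.getD_cons_zero, List.getD_cons_succ] at hB hC
    have hb2 : b ≤ 2 := by omega
    interval_cases b
    · -- (3,1,...)
      have hrep := ptab_rep1 (1 :: tl2) hsorted.of_cons
        (fun x hx => hpos x (by simp [hx])) (by simp)
      have hs2 : (1 :: tl2).sum = n - 3 := by simp at hsum ⊢; omega
      rw [hs2] at hrep
      rw [hrep]; simp
    · -- (3,2,...)
      have hc : tl2.getD 0 0 ≤ 1 := by omega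
      have hrep := ptab_rep1 tl2 hsorted.of_cons.of_cons
        (fun x hx => hpos x (by simp [hx])) hc
      have hs2 : tl2.sum = n - 5 := by simp at hsum ⊢; omega
      rw [hs2] at hrep
      rw [hrep]; simp
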